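/- Let τ and d be real numbers with 0 < τ < d and let α = α(τ,d). Then K_2 = √(1 - τ²/d²); equivalently, C_2 = i·(τ/|α|²)·√(1 - τ²/d²). -/

import Mathlib

/-- The saddle point `α(τ,d) = -i (d/τ - √(d²/τ² - 1))`. -/
noncomputable def alph (τ d : ℝ) : ℂ :=
  -Complex.I * ((d / τ - Real.sqrt (d ^ 2 / τ ^ 2 - 1) : ℝ) : ℂ)

/-- `C_m = (-1)^{m+1} d/(1+α)^m + d/(1-α)^m + (-1)^{m+1} iτ/α^m`. -/
noncomputable def Cm (τ d : ℝ) (m : ℕ) : ℂ :=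
  (-1) ^ (m + 1) * (d : ℂ) / (1 + alph τ d) ^ m + (d : ℂ) / (1 - alph τ d) ^ m +
    (-1) ^ (m + 1) * Complex.I * (τ : ℂ) / alph τ d ^ m

/-- `K_m = 1 - (iτ/d)^{m-1} [(-1)^{m+1} ((1-α)/2)^m + ((1+α)/2)^m]`. -/
noncomputable def Kc (τ d : ℝ) (m : ℕ) : ℂ :=
  1 - (Complex.I * (τ : ℂ) / (d : ℂ)) ^ (m - 1) *
    ((-1) ^ (m + 1) * ((1 - alph τ d) / 2) ^ m + ((1 + alph τ d) / 2) ^ m)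

/-- `K₂ = √(1 - τ²/d²)`; equivalently `C₂ = i (τ/|α|²) √(1 - τ²/d²)`. -/
theorem K_two_formula (τ d : ℝ) (h0 : 0 < τ) (hτd : τ < d) :
    Kc τ d 2 = ((Real.sqrt (1 - τ ^ 2 / d ^ 2) : ℝ) : ℂ) ∧
    Cm τ d 2 = Complex.I * ((τ / ‖alph τ d‖ ^ 2 : ℝ) : ℂ) *
      ((Real.sqrt (1 - τ ^ 2 / d ^ 2) : ℝ) : ℂ) := by
  have hd0 : 0 < d := h0.trans hτd
  have hτne : τ ≠ 0 := ne_of_gt h0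
  have hdne : d ≠ 0 := ne_of_gt hd0
  set s : ℝ := Real.sqrt (d ^ 2 / τ ^ 2 - 1) with hsdef
  have h1 : 0 ≤ d ^ 2 / τ ^ 2 - 1 := by
    rw [sub_nonneg, le_div_iff₀ (by positivity)]
    nlinarith
  have hs2 : s ^ 2 = d ^ 2 / τ ^ 2 - 1 := Real.sq_sqrt h1
  have hs0 : 0 ≤ s := Real.sqrt_nonneg _
  have hs2τ : s ^ 2 * τ ^ 2 = d ^ 2 - τ ^ 2 := by
    rw [hs2]; field_simp
  set a : ℝ := d / τ - s with hadef
  have hsτ : s * τ < d := by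
    nlinarith [hs2τ, mul_nonneg hs0 h0.le]
  have hslt : s < d / τ := (lt_div_iff₀ h0).2 hsτ
  have ha : 0 < a := sub_pos.2 hslt
  have hane : a ≠ 0 := ne_of_gt ha
  have haτ : a * τ = d - s * τ := by
    rw [hadef]; field_simp
  have key : (1 + a ^ 2) * τ ^ 2 = 2 * a * d * τ := by
    linear_combination (a * τ - d - s * τ) * haτ + hs2τ
  have hdR : d * (2 * a) = (1 + a ^ 2) * τ := by
    have hττ : d * (2 * a) * τ = (1 + a ^ 2) * τ * τ := by linear_combination -key
    exact mul_right_cancel₀ hτne hττ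
  have h2 : s * (2 * a) = 1 - a ^ 2 := by
    have hττ : s * (2 * a) * τ ^ 2 = (1 - a ^ 2) * τ ^ 2 := by
      linear_combination 2 * a * τ * haτ - key
    exact mul_right_cancel₀ (pow_ne_zero 2 hτne) hττ
  have hsq : Real.sqrt (1 - τ ^ 2 / d ^ 2) = τ * s / d := by
    rw [show 1 - τ ^ 2 / d ^ 2 = (τ * s / d) ^ 2 by
      field_simp
      linear_combination -hs2τ]
    exact Real.sqrt_sq (by positivity)
  have halph : alph τ d = -Complex.I * (a : ℝ) := by rw [alph, hadef, hsdef]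
  have habs : ‖alph τ d‖ = a := by
    rw [halph]; simp [abs_of_pos ha]
  have haC : (a : ℂ) ≠ 0 := by exact_mod_cast hane
  have hτC : (τ : ℂ) ≠ 0 := by exact_mod_cast hτne
  have h2aC : (2 * (a : ℂ)) ≠ 0 := by simp [haC]
  have hdC : (d : ℂ) = (1 + (a : ℂ) ^ 2) * τ / (2 * a) := by
    rw [eq_div_iff h2aC]
    have := congrArg (fun x : ℝ => (x : ℂ)) hdR
    push_cast at this
    linear_combination this
  have hsC : (s : ℂ) = (1 - (a : ℂ) ^ 2) / (2 * a) := by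
    rw [eq_div_iff h2aC]
    have := congrArg (fun x : ℝ => (x : ℂ)) h2
    push_cast at this
    linear_combination this
  have h1p : (1 : ℂ) + alph τ d ≠ 0 := by
    rw [halph]; intro h
    have := congrArg Complex.re h
    simp at this
  have h1m : (1 : ℂ) - alph τ d ≠ 0 := by
    rw [halph]; intro h
    have := congrArg Complex.re h
    simp at this
  have hαne : alph τ d ≠ 0 := by
    rw [halph]; simp [haC, Complex.I_ne_zero]
  clear_value s a
  constructor
  · rw [Kc, hsq, halph]
    push_cast
    rw [hsC, hdC]
    have h1a : ((1:ℂ) + (a:ℂ)^2) ≠ 0 := by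
      exact_mod_cast (show ((1:ℝ)+a^2 ≠ 0) by positivity)
    field_simp [h1a]
    simp only [Complex.ext_iff, Complex.add_re, Complex.add_im, Complex.mul_re, Complex.mul_im,
      Complex.sub_re, Complex.sub_im, Complex.one_re, Complex.one_im, Complex.I_re, Complex.I_im,
      Complex.ofReal_re, Complex.ofReal_im, Complex.neg_re, Complex.neg_im, Complex.re_ofNat, Complex.im_ofNat, pow_succ, pow_zero,
      one_mul]
    constructor <;> ring
  · have hne1 : (1 : ℂ) + alph τ d ≠ 0 := h1p
    have h1a : ((1:ℂ) + (a:ℂ)^2) ≠ 0 := by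
      exact_mod_cast (show ((1:ℝ)+a^2 ≠ 0) by positivity)
    have hdCne : (d : ℂ) ≠ 0 := by exact_mod_cast hdne
    have hα2 : (alph τ d) ^ 2 = -((a:ℂ)^2) := by
      rw [halph]; linear_combination (a:ℂ)^2 * Complex.I_sq
    have e1 : (d:ℂ) / (1 + alph τ d) ^ 2
        = (d:ℂ) * (1 - (a:ℂ)^2 + 2*Complex.I*a) / ((1+(a:ℂ)^2)^2) := by
      rw [div_eq_div_iff (pow_ne_zero 2 h1p) (pow_ne_zero 2 h1a), halph]
      linear_combination ((d:ℂ)*(3*(a:ℂ)^2+(a:ℂ)^4) - 2*(d:ℂ)*(a:ℂ)^3*Complex.I) * Complex.I_sq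
    have e2 : (d:ℂ) / (1 - alph τ d) ^ 2
        = (d:ℂ) * (1 - (a:ℂ)^2 - 2*Complex.I*a) / ((1+(a:ℂ)^2)^2) := by
      rw [div_eq_div_iff (pow_ne_zero 2 h1m) (pow_ne_zero 2 h1a), halph]
      linear_combination ((d:ℂ)*(3*(a:ℂ)^2+(a:ℂ)^4) + 2*(d:ℂ)*(a:ℂ)^3*Complex.I) * Complex.I_sq
    rw [Cm, hsq, habs, hα2]
    rw [show ((-1:ℂ)) ^ (2 + 1) * (d:ℂ) / (1 + alph τ d) ^ 2
        = -((d:ℂ) / (1 + alph τ d) ^ 2) by ring]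
    rw [e1, e2]
    push_cast
    rw [hsC, hdC]
    set_option maxHeartbeats 1000000 in
    field_simp [h1a, haC, hτC]
    ring
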